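/- Ky Fan minimum principle: for a real symmetric N×N matrix A with eigenvalues λ₁ ≤ ⋯ ≤ λ_N, the sum λ₁ + ⋯ + λ_q equals the minimum of tr(Vᵀ A V) over all N×q matrices V with orthonormal columns. -/

import Mathlib

open Matrix

lemma comb_aux {N q : ℕ} (hq1 : 1 ≤ q) (hqN : q ≤ N) (μ : Fin N → ℝ) (hμ : Monotone μ)
    (t : Fin N → ℝ) (ht0 : ∀ i, 0 ≤ t i) (ht1 : ∀ i, t i ≤ 1) (hts : ∑ i, t i = q) :
    ∑ j : Fin q, μ (Fin.castLE hqN j) ≤ ∑ i, μ i * t i := by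
  classical
  set S : Finset (Fin N) := (Finset.univ : Finset (Fin q)).map (Fin.castLEEmb hqN) with hS
  have hmem : ∀ i : Fin N, i ∈ S ↔ (i : ℕ) < q := by
    intro i
    simp only [hS, Finset.mem_map, Finset.mem_univ, true_and]
    constructor
    · rintro ⟨j, rfl⟩; exact j.isLt
    · intro hi; exact ⟨⟨i, hi⟩, rfl⟩
  have hcard : S.card = q := by simp [hS]
  have hsum : ∑ j : Fin q, μ (Fin.castLE hqN j) = ∑ i ∈ S, μ i := by
    rw [hS, Finset.sum_map]; rfl
  set c : ℝ := μ ⟨q - 1, by omega⟩ with hc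
  have hc1 : ∀ i ∈ S, μ i ≤ c := by
    intro i hi
    exact hμ (by rw [Fin.le_def]; have := (hmem i).1 hi; simp; omega)
  have hc2 : ∀ i ∉ S, c ≤ μ i := by
    intro i hi
    refine hμ ?_
    rw [Fin.le_def]
    have : ¬ (i : ℕ) < q := fun h => hi ((hmem i).2 h)
    simp; omega
  have key : ∑ i ∈ S, (μ i - c) ≤ ∑ i, (μ i - c) * t i := by
    rw [← Finset.sum_add_sum_compl S]
    have h1 : ∑ i ∈ S, (μ i - c) ≤ ∑ i ∈ S, (μ i - c) * t i := by
      apply Finset.sum_le_sum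
      intro i hi
      nlinarith [hc1 i hi, ht1 i, ht0 i]
    have h2 : (0:ℝ) ≤ ∑ i ∈ Sᶜ, (μ i - c) * t i := by
      apply Finset.sum_nonneg
      intro i hi
      have := hc2 i (Finset.mem_compl.mp hi)
      nlinarith [ht0 i]
    linarith
  have e1 : ∑ i, μ i * t i = ∑ i, (μ i - c) * t i + c * (q : ℝ) := by
    rw [← hts, Finset.mul_sum, ← Finset.sum_add_distrib]
    congr 1; ext i; ring
  have e2 : ∑ i ∈ S, μ i = ∑ i ∈ S, (μ i - c) + c * (q : ℝ) := by
    rw [Finset.sum_sub_distrib, Finset.sum_const, hcard]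
    ring
  rw [hsum]; linarith

lemma trace_formula {N q : ℕ} (d : Fin N → ℝ) (W : Matrix (Fin N) (Fin q) ℝ) :
    Matrix.trace (Wᵀ * Matrix.diagonal d * W) = ∑ i, d i * ∑ j, W i j ^ 2 := by
  simp only [Matrix.trace, Matrix.diag_apply, Matrix.mul_apply, Matrix.transpose_apply,
    Matrix.diagonal_apply, mul_ite, ite_mul, mul_zero, zero_mul, Finset.sum_ite_eq,
    Finset.sum_ite_eq', Finset.mem_univ, if_true]
  rw [Finset.sum_comm]
  congr 1; ext i
  rw [Finset.mul_sum]
  congr 1; ext j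
  ring

/-- Ky Fan minimum principle: for a real symmetric `N × N` matrix `A` with eigenvalues
`μ 0 ≤ ⋯ ≤ μ (N−1)` listed with multiplicity in nondecreasing order, the sum of the `q`
smallest eigenvalues is the minimum of `tr (Vᵀ A V)` over all `N × q` matrices `V` with
orthonormal columns (`Vᵀ V = 1`). -/
theorem stmt_15 {N : ℕ} (A : Matrix (Fin N) (Fin N) ℝ) (hA : A.IsHermitian)
    (μ : Fin N → ℝ) (hμ : Monotone μ)
    (hperm : ∃ σ : Equiv.Perm (Fin N), μ = hA.eigenvalues ∘ σ)
    (q : ℕ) (hq1 : 1 ≤ q) (hqN : q ≤ N) :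
    IsLeast {r : ℝ | ∃ V : Matrix (Fin N) (Fin q) ℝ,
        Vᵀ * V = 1 ∧ r = Matrix.trace (Vᵀ * A * V)}
      (∑ j : Fin q, μ (Fin.castLE hqN j)) := by
  classical
  obtain ⟨σ, hσ⟩ := hperm
  set lam : Fin N → ℝ := hA.eigenvalues with hlamdef
  set U : Matrix (Fin N) (Fin N) ℝ := (hA.eigenvectorUnitary : Matrix (Fin N) (Fin N) ℝ)
    with hUdef
  have hU1 : U * Uᵀ = 1 := by
    have := Matrix.mem_unitaryGroup_iff.mp hA.eigenvectorUnitary.2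
    rwa [star_eq_conjTranspose, conjTranspose_eq_transpose_of_trivial] at this
  have hU2 : Uᵀ * U = 1 := by
    have := Matrix.mem_unitaryGroup_iff'.mp hA.eigenvectorUnitary.2
    rwa [star_eq_conjTranspose, conjTranspose_eq_transpose_of_trivial] at this
  have hspec : A = U * Matrix.diagonal lam * Uᵀ := by
    have := hA.spectral_theorem
    rwa [Unitary.conjStarAlgAut_apply, star_eq_conjTranspose, conjTranspose_eq_transpose_of_trivial,
      RCLike.ofReal_real_eq_id, Function.id_comp] at this
  constructor
  · -- membership
    set e : Fin q → Fin N := fun j => σ (Fin.castLE hqN j) with he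
    have hei : Function.Injective e := fun a b h =>
      Fin.castLE_injective hqN (σ.injective h)
    set V : Matrix (Fin N) (Fin q) ℝ := Matrix.of (fun i j => U i (e j)) with hV
    set M : Matrix (Fin N) (Fin q) ℝ :=
      Matrix.of (fun i j => if i = e j then (1:ℝ) else 0) with hM
    have hUV : Uᵀ * V = M := by
      ext i j
      have h := congrFun (congrFun hU2 i) (e j)
      rw [Matrix.mul_apply] at h
      simp only [Matrix.transpose_apply] at h
      simp only [Matrix.mul_apply, Matrix.transpose_apply, hV, Matrix.of_apply, hM]
      rw [h, Matrix.one_apply]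
    have hortho : Vᵀ * V = 1 := by
      ext j k
      have h := congrFun (congrFun hU2 (e j)) (e k)
      rw [Matrix.mul_apply] at h
      simp only [Matrix.transpose_apply] at h
      simp only [Matrix.mul_apply, Matrix.transpose_apply, hV, Matrix.of_apply]
      rw [h, Matrix.one_apply, Matrix.one_apply]
      simp [hei.eq_iff]
    refine ⟨V, hortho, ?_⟩
    have hVAV : Vᵀ * A * V = Mᵀ * Matrix.diagonal lam * M := by
      rw [hspec, ← hUV, Matrix.transpose_mul, Matrix.transpose_transpose]
      simp only [Matrix.mul_assoc]
    rw [hVAV, trace_formula]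
    have : ∀ i, lam i * ∑ j, M i j ^ 2 = ∑ j, if i = e j then lam i else 0 := by
      intro i
      rw [Finset.mul_sum]
      congr 1; ext j
      simp only [hM, Matrix.of_apply]
      by_cases h : i = e j <;> simp [h]
    simp only [this]
    rw [Finset.sum_comm]
    simp only [Finset.sum_ite_eq', Finset.mem_univ, if_true]
    simp [hσ, he]
  · -- lower bound
    rintro r ⟨V, hVo, rfl⟩
    set W : Matrix (Fin N) (Fin q) ℝ := Uᵀ * V with hW
    have hWW : Wᵀ * W = 1 := by
      rw [hW, Matrix.transpose_mul, Matrix.transpose_transpose]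
      calc Vᵀ * U * (Uᵀ * V) = Vᵀ * (U * Uᵀ) * V := by simp only [Matrix.mul_assoc]
        _ = 1 := by rw [hU1, Matrix.mul_one, hVo]
    set P : Matrix (Fin N) (Fin N) ℝ := W * Wᵀ with hP
    have hPsymm : Pᵀ = P := by rw [hP, Matrix.transpose_mul, Matrix.transpose_transpose]
    have hPP : P * P = P := by
      rw [hP, Matrix.mul_assoc, ← Matrix.mul_assoc Wᵀ, hWW, Matrix.one_mul]
    set s : Fin N → ℝ := fun i => ∑ j, W i j ^ 2 with hs
    have hsP : ∀ i, s i = P i i := by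
      intro i
      simp [hs, hP, Matrix.mul_apply, Matrix.transpose_apply, sq]
    have hs0 : ∀ i, 0 ≤ s i := fun i =>
      Finset.sum_nonneg (fun j _ => sq_nonneg _)
    have hsq : ∀ i, s i ^ 2 ≤ s i := by
      intro i
      have h1 : P i i = ∑ k, P i k ^ 2 := by
        conv_lhs => rw [← hPP]
        rw [Matrix.mul_apply]
        apply Finset.sum_congr rfl
        intro k _
        have hk : P k i = P i k := by
          conv_lhs => rw [← hPsymm]
          rfl
        rw [hk, sq]
      have h2 : P i i ^ 2 ≤ ∑ k, P i k ^ 2 :=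
        Finset.single_le_sum (f := fun k => P i k ^ 2)
          (fun k _ => sq_nonneg _) (Finset.mem_univ i)
      rw [hsP i]
      conv_rhs => rw [h1]
      rw [h1] at h2 ⊢
      exact h2
    have hs1 : ∀ i, s i ≤ 1 := by
      intro i
      nlinarith [hsq i, hs0 i]
    have hssum : ∑ i, s i = (q : ℝ) := by
      have : ∑ i, s i = Matrix.trace P := by
        simp only [Matrix.trace, Matrix.diag_apply]
        exact Finset.sum_congr rfl (fun i _ => hsP i)
      rw [this, hP, Matrix.trace_mul_comm, hWW, Matrix.trace_one]
      simp
    have htr : Matrix.trace (Vᵀ * A * V) = ∑ i, lam i * s i := by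
      have hVAV : Vᵀ * A * V = Wᵀ * Matrix.diagonal lam * W := by
        rw [hspec, hW, Matrix.transpose_mul, Matrix.transpose_transpose]
        simp only [Matrix.mul_assoc]
      rw [hVAV, trace_formula]
    rw [htr]
    have hre : ∑ i, lam i * s i = ∑ i, μ i * s (σ i) := by
      rw [hσ]
      exact (Equiv.sum_comp σ (fun i => lam i * s i)).symm
    rw [hre]
    refine comb_aux hq1 hqN μ hμ (fun i => s (σ i)) (fun i => hs0 _) (fun i => hs1 _) ?_
    rw [Equiv.sum_comp σ s, hssum]
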